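/- For every 0 < β ≤ 1/3, the Lebesgue constants for interpolation at the endpoint sets Y_{s-1} of the Cantor set K_β tend to infinity: Λ_{2^s}(Y_{s-1}, K_β) → ∞ as s → ∞. In fact Λ_{2^s}(Y_{s-1}, K_β) ≥ β^s / (1 - β^2)^{2^{s-1}}, which tends to infinity. -/

import Mathlib

private lemma aux_key (β p : ℝ) (hβ : 0 < β) (hβ' : β ≤ 1/3) (hp : 0 < p) (hp3 : p ≤ 1/3) :
    β * ((1 - p) * (1 - 2 * p)) ≤ (1 - β) * (1 - β * p) := by
  nlinarith [mul_nonneg (mul_nonneg hβ.le hp.le) (by linarith : (0:ℝ) ≤ 1 - p),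
    mul_nonneg (mul_nonneg hβ.le hβ.le) hp.le]

private lemma aux_prod3 (β p : ℝ) (hβ : 0 < β) (hβ' : β ≤ 1/3) (hp : 0 < p) (hp3 : p ≤ 1/3) :
    β * (β * p) * ((1 - p) * ((1 - 2 * p) * p)) ≤ β * p * ((p - β * p) * (1 - β * p)) := by
  have key := aux_key β p hβ hβ' hp hp3
  have hc : (0:ℝ) ≤ β * p * p := by positivity
  nlinarith [mul_le_mul_of_nonneg_left key hc]

private lemma aux_pairineq (β p y : ℝ) (hβ : 0 < β) (hβ' : β ≤ 1/3) (hp : 0 < p)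
    (hp3 : p ≤ 1/3) (hlo : p < y) (hhi : y < 1 - p) :
    (1 - p - y) * (y - p) ≤ (y - β * p) * (1 - y - β * p) := by
  nlinarith [mul_nonneg (mul_nonneg hp.le (by linarith : (0:ℝ) ≤ 1 - β))
    (by nlinarith : (0:ℝ) ≤ 1 - p - β * p)]

private lemma aux_rightineq (β p y : ℝ) (hβ : 0 < β) (hβ' : β ≤ 1/3) (hp : 0 < p)
    (hpβ : p ≤ β) (hy0 : 0 ≤ y) (hy1 : y ≤ 1) :
    1 - 2*β + β*p + β*y ≤ (1 - β^2) * (1 - β + β*y - β*(β*p)) := by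
  nlinarith [mul_pos hβ hp, mul_nonneg hβ.le hy0, mul_nonneg (mul_nonneg hβ.le hβ.le) hp.le,
    mul_nonneg (mul_nonneg hβ.le hβ.le) hy0]

private lemma aux_nat_sq_le : ∀ s : ℕ, 7 ≤ s → s * s ≤ 2 ^ (s - 1) := by
  intro s hs
  induction s with
  | zero => omega
  | succ n ih =>
    rcases Nat.lt_or_ge n 7 with h | h
    · interval_cases n <;> simp_all <;> omega
    · have h1 := ih (by omega)
      have h2 : 2 ^ (n + 1 - 1) = 2 * 2 ^ (n - 1) := by
        rw [show n + 1 - 1 = (n - 1) + 1 by omega]; ring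
      have h3 : 2 * n + 1 ≤ n * n := by nlinarith
      calc (n+1) * (n+1) = n * n + (2 * n + 1) := by ring
      _ ≤ 2 * (n * n) := by omega
      _ ≤ 2 * 2 ^ (n - 1) := by omega
      _ = 2 ^ (n + 1 - 1) := h2.symm

set_option maxHeartbeats 2000000 in
/-- For `K_β` with `0 < β ≤ 1/3`, the Lebesgue constants at the endpoint nodes
`Y_{s-1}` satisfy `Λ_{2^s} ≥ β^s/(1-β²)^{2^{s-1}}` (for `s ≥ 3`) and tend to `∞`. -/
theorem stmt_8 (β : ℝ) (hβ : 0 < β) (hβ' : β ≤ 1/3)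
    (L : ℕ → ℕ → ℝ) (hL0 : L 0 0 = 0)
    (hLleft : ∀ k j, L (k + 1) (2 * j) = L k j)
    (hLright : ∀ k j, L (k + 1) (2 * j + 1) = L k j + β ^ k - β ^ (k + 1))
    (K : Set ℝ)
    (hK : K = ⋂ k : ℕ, ⋃ j ∈ Finset.range (2 ^ k), Set.Icc (L k j) (L k j + β ^ k))
    (Y : ℕ → Finset ℝ)
    (hY : ∀ s : ℕ, Y s = (Finset.range (2 ^ s)).image (L s) ∪
      (Finset.range (2 ^ s)).image (fun j => L s j + β ^ s))
    (Λ : ℕ → ℝ)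
    (hΛ : ∀ s : ℕ, Λ s = sSup {t : ℝ | ∃ x ∈ K,
      t = ∑ z ∈ Y (s - 1), |∏ y ∈ (Y (s - 1)).erase z, ((x - y) / (z - y))|}) :
    (∀ s : ℕ, 3 ≤ s → β ^ s / (1 - β ^ 2) ^ 2 ^ (s - 1) ≤ Λ s) ∧
      Filter.Tendsto Λ Filter.atTop Filter.atTop := by
  have hβ1 : β < 1 := by linarith
  have hpow_pos : ∀ m : ℕ, 0 < β ^ m := fun m => pow_pos hβ m
  -- ====== structural facts about L ======
  have C1 : ∀ m, L m 0 = 0 := by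
    intro m
    induction m with
    | zero => exact hL0
    | succ n ih => have := hLleft n 0; simpa using this.trans ih
  have C2 : ∀ m, L m (2 ^ m - 1) = 1 - β ^ m := by
    intro m
    induction m with
    | zero => simpa using hL0
    | succ n ih =>
      have h2 : 2 ^ (n + 1) - 1 = 2 * (2 ^ n - 1) + 1 := by
        have := Nat.one_le_two_pow (n := n); omega
      rw [h2, hLright n (2 ^ n - 1), ih]; ring
  have C3 : ∀ m, ∀ j < 2 ^ m, 0 ≤ L m j ∧ L m j + β ^ m ≤ 1 := by
    intro m
    induction m with
    | zero => intro j hj; interval_cases j; simp [hL0]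
    | succ n ih =>
      intro j hj
      have h2 : 2 ^ (n + 1) = 2 * 2 ^ n := by ring
      obtain ⟨i, rfl | rfl⟩ : ∃ i, j = 2 * i ∨ j = 2 * i + 1 := ⟨j / 2, by omega⟩
      · have hi : i < 2 ^ n := by omega
        obtain ⟨h1, h2'⟩ := ih i hi
        rw [hLleft n i]
        constructor
        · exact h1
        · have : β ^ (n+1) ≤ β ^ n := pow_le_pow_of_le_one hβ.le hβ1.le (by omega)
          linarith
      · have hi : i < 2 ^ n := by omega
        obtain ⟨h1, h2'⟩ := ih i hi
        rw [hLright n i]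
        have hp : 0 < β ^ (n+1) := hpow_pos _
        have : β ^ (n+1) ≤ β ^ n := pow_le_pow_of_le_one hβ.le hβ1.le (by omega)
        constructor <;> nlinarith
  have C4 : ∀ m, ∀ j < 2 ^ m, L m j = 0 ∨ 2 * β ^ m ≤ L m j := by
    intro m
    induction m with
    | zero => intro j hj; interval_cases j; left; exact hL0
    | succ n ih =>
      intro j hj
      obtain ⟨i, rfl | rfl⟩ : ∃ i, j = 2 * i ∨ j = 2 * i + 1 := ⟨j / 2, by omega⟩
      · have hi : i < 2 ^ n := by omega
        rw [hLleft n i]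
        rcases ih i hi with h | h
        · left; exact h
        · right
          have : β ^ (n+1) ≤ β ^ n := pow_le_pow_of_le_one hβ.le hβ1.le (by omega)
          linarith
      · have hi : i < 2 ^ n := by omega
        rw [hLright n i]
        right
        have h0 := (C3 n i hi).1
        have hpn : 0 < β ^ n := hpow_pos n
        have hps : β ^ (n+1) = β * β ^ n := by ring
        nlinarith
  have C6 : ∀ m, ∀ j < 2 ^ m, L m j + L m (2 ^ m - 1 - j) = 1 - β ^ m := by
    intro m
    induction m with
    | zero => intro j hj; interval_cases j; simp [hL0]
    | succ n ih =>
      intro j hj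
      have h2 : 2 ^ (n + 1) = 2 * 2 ^ n := by ring
      have h1n : 1 ≤ 2 ^ n := Nat.one_le_two_pow
      obtain ⟨i, rfl | rfl⟩ : ∃ i, j = 2 * i ∨ j = 2 * i + 1 := ⟨j / 2, by omega⟩
      · have hi : i < 2 ^ n := by omega
        have hc : 2 ^ (n+1) - 1 - 2 * i = 2 * (2 ^ n - 1 - i) + 1 := by omega
        rw [hc, hLleft n i, hLright n (2 ^ n - 1 - i)]
        have := ih i hi
        ring_nf
        ring_nf at this
        linarith
      · have hi : i < 2 ^ n := by omega
        have hc : 2 ^ (n+1) - 1 - (2 * i + 1) = 2 * (2 ^ n - 1 - i) := by omega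
        rw [hc, hLright n i, hLleft n (2 ^ n - 1 - i)]
        have := ih i hi
        ring_nf
        ring_nf at this
        linarith
  have C7a : ∀ m, ∀ j < 2 ^ m, L (m + 1) j = β * L m j := by
    intro m
    induction m with
    | zero => intro j hj; interval_cases j; simp [hL0, C1]
    | succ n ih =>
      intro j hj
      obtain ⟨i, rfl | rfl⟩ : ∃ i, j = 2 * i ∨ j = 2 * i + 1 := ⟨j / 2, by omega⟩
      · have hi : i < 2 ^ n := by omega
        rw [hLleft (n+1) i, hLleft n i, ih i hi]
      · have hi : i < 2 ^ n := by omega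
        rw [hLright (n+1) i, hLright n i, ih i hi]
        ring
  have C7b : ∀ m, ∀ j < 2 ^ m, L (m + 1) (2 ^ m + j) = 1 - β + β * L m j := by
    intro m
    induction m with
    | zero =>
      intro j hj; interval_cases j
      have := hLright 0 0
      simp [hL0] at this
      simpa [hL0] using this
    | succ n ih =>
      intro j hj
      have h2 : 2 ^ (n + 1) = 2 * 2 ^ n := by ring
      obtain ⟨i, rfl | rfl⟩ : ∃ i, j = 2 * i ∨ j = 2 * i + 1 := ⟨j / 2, by omega⟩
      · have hi : i < 2 ^ n := by omega
        have hc : 2 ^ (n+1) + 2 * i = 2 * (2 ^ n + i) := by omega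
        rw [hc, hLleft (n+1) (2^n + i), ih i hi, hLleft n i]
      · have hi : i < 2 ^ n := by omega
        have hc : 2 ^ (n+1) + (2 * i + 1) = 2 * (2 ^ n + i) + 1 := by omega
        rw [hc, hLright (n+1) (2^n + i), ih i hi, hLright n i]
        ring
  have C9 : ∀ s d : ℕ, L (s + d) (2 ^ d - 1) = β ^ s - β ^ (s + d) := by
    intro s d
    induction d with
    | zero => simp [C1 s]
    | succ n ih =>
      have hidx : 2 ^ (n+1) - 1 = 2 * (2 ^ n - 1) + 1 := by
        have := Nat.one_le_two_pow (n := n); omega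
      rw [show s + (n+1) = (s + n) + 1 from by omega, hidx, hLright (s+n) (2 ^ n - 1), ih]
      ring_nf
  -- ====== facts about Y ======
  have Ymem : ∀ m (y : ℝ), y ∈ Y m ↔ ∃ j < 2 ^ m, L m j = y ∨ L m j + β ^ m = y := by
    intro m y
    rw [hY m]
    simp only [Finset.mem_union, Finset.mem_image, Finset.mem_range]
    constructor
    · rintro (⟨j, hj, rfl⟩ | ⟨j, hj, rfl⟩)
      · exact ⟨j, hj, Or.inl rfl⟩
      · exact ⟨j, hj, Or.inr rfl⟩
    · rintro ⟨j, hj, rfl | rfl⟩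
      · exact Or.inl ⟨j, hj, rfl⟩
      · exact Or.inr ⟨j, hj, rfl⟩
  have Ysub : ∀ m, ∀ y ∈ Y m, 0 ≤ y ∧ y ≤ 1 := by
    intro m y hy
    rw [Ymem] at hy
    obtain ⟨j, hj, rfl | rfl⟩ := hy
    · obtain ⟨h1, h2⟩ := C3 m j hj
      have := hpow_pos m
      exact ⟨h1, by linarith⟩
    · obtain ⟨h1, h2⟩ := C3 m j hj
      have := hpow_pos m
      exact ⟨by linarith, h2⟩
  have Ymem0 : ∀ m, (0:ℝ) ∈ Y m := by
    intro m
    rw [Ymem]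
    exact ⟨0, Nat.two_pow_pos m, Or.inl (C1 m)⟩
  have Ymemb : ∀ m, (β ^ m : ℝ) ∈ Y m := by
    intro m
    rw [Ymem]
    exact ⟨0, Nat.two_pow_pos m, Or.inr (by rw [C1 m]; ring)⟩
  have Ymem1b : ∀ m, (1 - β ^ m : ℝ) ∈ Y m := by
    intro m
    rw [Ymem]
    refine ⟨2 ^ m - 1, by have := Nat.one_le_two_pow (n := m); omega, Or.inl (C2 m)⟩
  have Ymem1 : ∀ m, (1:ℝ) ∈ Y m := by
    intro m
    rw [Ymem]
    refine ⟨2 ^ m - 1, by have := Nat.one_le_two_pow (n := m); omega, Or.inr (by rw [C2 m]; ring)⟩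
  have Ysymm : ∀ m, ∀ y ∈ Y m, (1 - y) ∈ Y m := by
    intro m y hy
    rw [Ymem] at hy ⊢
    obtain ⟨j, hj, rfl | rfl⟩ := hy
    · refine ⟨2 ^ m - 1 - j, by omega, Or.inr ?_⟩
      have := C6 m j hj
      linarith
    · refine ⟨2 ^ m - 1 - j, by omega, Or.inl ?_⟩
      have := C6 m j hj
      linarith
  have Ybounds : ∀ m, ∀ y ∈ Y m, y ≠ 0 → y ≠ β ^ m → y ≠ 1 - β ^ m → y ≠ 1 →
      β ^ m < y ∧ y < 1 - β ^ m := by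
    intro m y hy h0 hb h1b h1
    have hbm : 0 < β ^ m := hpow_pos m
    rw [Ymem] at hy
    obtain ⟨j, hj, rfl | rfl⟩ := hy
    · have hlow : 2 * β ^ m ≤ L m j := by
        rcases C4 m j hj with h | h
        · exact absurd h h0
        · exact h
      have hc : L m j + L m (2 ^ m - 1 - j) = 1 - β ^ m := C6 m j hj
      have hcb : L m (2 ^ m - 1 - j) = 0 ∨ 2 * β ^ m ≤ L m (2 ^ m - 1 - j) :=
        C4 m (2 ^ m - 1 - j) (by omega)
      rcases hcb with h | h
      · exfalso; apply h1b; linarith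
      · constructor <;> linarith
    · have hlow : L m j = 0 ∨ 2 * β ^ m ≤ L m j := C4 m j hj
      rcases hlow with h | h
      · exfalso; apply hb; rw [h]; ring
      · have hc : L m j + L m (2 ^ m - 1 - j) = 1 - β ^ m := C6 m j hj
        have hcb : L m (2 ^ m - 1 - j) = 0 ∨ 2 * β ^ m ≤ L m (2 ^ m - 1 - j) :=
          C4 m (2 ^ m - 1 - j) (by omega)
        rcases hcb with h' | h'
        · exfalso; apply h1; linarith
        · constructor <;> linarith
  have Ysplit : ∀ m, Y (m + 1) =
      (Y m).image (fun y => β * y) ∪ (Y m).image (fun y => 1 - β + β * y) := by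
    intro m
    ext a
    simp only [Finset.mem_union, Finset.mem_image]
    constructor
    · intro ha
      rw [Ymem] at ha
      obtain ⟨j, hj, rfl | rfl⟩ := ha
      · rcases Nat.lt_or_ge j (2 ^ m) with hj' | hj'
        · left
          exact ⟨L m j, (Ymem m _).2 ⟨j, hj', Or.inl rfl⟩, (C7a m j hj').symm⟩
        · right
          have hj2 : j - 2 ^ m < 2 ^ m := by
            have h2 : 2 ^ (m + 1) = 2 * 2 ^ m := by ring
            omega
          refine ⟨L m (j - 2 ^ m), (Ymem m _).2 ⟨j - 2 ^ m, hj2, Or.inl rfl⟩, ?_⟩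
          have := C7b m (j - 2 ^ m) hj2
          rw [show 2 ^ m + (j - 2 ^ m) = j by omega] at this
          exact this.symm
      · rcases Nat.lt_or_ge j (2 ^ m) with hj' | hj'
        · left
          refine ⟨L m j + β ^ m, (Ymem m _).2 ⟨j, hj', Or.inr rfl⟩, ?_⟩
          rw [C7a m j hj']; ring
        · right
          have hj2 : j - 2 ^ m < 2 ^ m := by
            have h2 : 2 ^ (m + 1) = 2 * 2 ^ m := by ring
            omega
          refine ⟨L m (j - 2 ^ m) + β ^ m, (Ymem m _).2 ⟨j - 2 ^ m, hj2, Or.inr rfl⟩, ?_⟩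
          have := C7b m (j - 2 ^ m) hj2
          rw [show 2 ^ m + (j - 2 ^ m) = j by omega] at this
          rw [this]; ring
    · have h2 : 2 ^ (m + 1) = 2 * 2 ^ m := by ring
      rintro (⟨y, hy, rfl⟩ | ⟨y, hy, rfl⟩) <;>
        rw [Ymem] at hy <;> obtain ⟨j, hj, rfl | rfl⟩ := hy <;> rw [Ymem]
      · exact ⟨j, by omega, Or.inl (C7a m j hj)⟩
      · exact ⟨j, by omega, Or.inr (by rw [C7a m j hj]; ring)⟩
      · exact ⟨2 ^ m + j, by omega, Or.inl (C7b m j hj)⟩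
      · exact ⟨2 ^ m + j, by omega, Or.inr (by rw [C7b m j hj]; ring)⟩
  have Ycard : ∀ m, (Y m).card = 2 ^ (m + 1) := by
    intro m
    induction m with
    | zero =>
      rw [hY 0]
      rw [pow_zero, pow_zero, Finset.range_one, Finset.image_singleton, Finset.image_singleton]
      rw [Finset.card_union_of_disjoint (by
        rw [Finset.disjoint_singleton]
        intro h; linarith)]
      simp
    | succ n ih =>
      rw [Ysplit n]
      have hinj1 : Function.Injective (fun y : ℝ => β * y) :=
        fun a b h => mul_left_cancel₀ (ne_of_gt hβ) h
      have hinj2 : Function.Injective (fun y : ℝ => 1 - β + β * y) := by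
        intro a b h
        simp only at h
        have : β * a = β * b := by linarith
        exact mul_left_cancel₀ (ne_of_gt hβ) this
      rw [Finset.card_union_of_disjoint, Finset.card_image_of_injective _ hinj1,
        Finset.card_image_of_injective _ hinj2, ih]
      · ring
      · rw [Finset.disjoint_left]
        rintro a ha hb
        simp only [Finset.mem_image] at ha hb
        obtain ⟨y, hy, rfl⟩ := ha
        obtain ⟨y', hy', heq⟩ := hb
        have h1 := (Ysub n y hy).2
        have h2 := (Ysub n y' hy').1
        nlinarith
  -- ====== the key product lower bound (level m, pairing argument) ======
  have Qbound : ∀ m, 1 ≤ m → β ^ (m + 2) ≤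
      ∏ y ∈ (Y m).erase (1 - β ^ m), |β ^ (m + 1) - y| / |1 - β ^ m - y| := by
    intro m hm
    have hbm : 0 < β ^ m := pow_pos hβ m
    have hbm3 : β ^ m ≤ 1/3 := by
      calc β ^ m ≤ β ^ 1 := pow_le_pow_of_le_one hβ.le hβ1.le hm
      _ = β := pow_one β
      _ ≤ 1/3 := hβ'
    have hbm1 : β ^ (m+1) = β * β ^ m := by ring
    have hbm2 : β ^ (m+2) = β * (β * β ^ m) := by ring
    have hbmlt : β ^ (m+1) < β ^ m := by rw [hbm1]; nlinarith
    set f : ℝ → ℝ := fun y => |β ^ (m+1) - y| / |1 - β ^ m - y| with hf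
    set z : ℝ := 1 - β ^ m with hz
    set S : Finset ℝ := (Y m).erase z with hS
    have h0ne : (0:ℝ) ≠ z := by rw [hz]; intro h; nlinarith
    have hbne : (β ^ m : ℝ) ≠ z := by rw [hz]; intro h; nlinarith
    have h1ne : (1:ℝ) ≠ z := by rw [hz]; intro h; nlinarith
    have h0S : (0:ℝ) ∈ S := Finset.mem_erase.2 ⟨h0ne, Ymem0 m⟩
    have hbS : (β ^ m : ℝ) ∈ S.erase 0 :=
      Finset.mem_erase.2 ⟨ne_of_gt hbm, Finset.mem_erase.2 ⟨hbne, Ymemb m⟩⟩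
    have h1S : (1:ℝ) ∈ (S.erase 0).erase (β ^ m) := by
      refine Finset.mem_erase.2 ⟨?_, Finset.mem_erase.2 ⟨one_ne_zero, Finset.mem_erase.2 ⟨h1ne, Ymem1 m⟩⟩⟩
      intro h; nlinarith
    set T : Finset ℝ := ((S.erase 0).erase (β ^ m)).erase 1 with hT
    have hmemT : ∀ y : ℝ, y ∈ T ↔ (y ∈ Y m ∧ y ≠ 0 ∧ y ≠ β ^ m ∧ y ≠ z ∧ y ≠ 1) := by
      intro y
      simp only [hT, hS, Finset.mem_erase]
      tauto
    have hTb : ∀ y ∈ T, β ^ m < y ∧ y < 1 - β ^ m := by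
      intro y hy
      rw [hmemT] at hy
      obtain ⟨hY', h0, hb, hzne, h1⟩ := hy
      exact Ybounds m y hY' h0 hb (by rw [← hz]; exact hzne) h1
    have hTclosed : ∀ y ∈ T, (1 - y) ∈ T := by
      intro y hy
      rw [hmemT] at hy ⊢
      obtain ⟨hY', h0, hb, hzne, h1⟩ := hy
      refine ⟨Ysymm m y hY', ?_, ?_, ?_, ?_⟩
      · intro h; apply h1; linarith
      · intro h; apply hzne; rw [hz]; linarith
      · rw [hz]; intro h; apply hb; linarith
      · intro h; apply h0; linarith
    have hpair : ∀ y ∈ T, 1 ≤ f y * f (1 - y) := by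
      intro y hy
      obtain ⟨hlo, hhi⟩ := hTb y hy
      have e1 : |β ^ (m+1) - y| = y - β ^ (m+1) := by
        rw [abs_sub_comm]; exact abs_of_pos (by linarith)
      have e2 : |1 - β ^ m - y| = 1 - β ^ m - y := abs_of_pos (by linarith)
      have e3 : |β ^ (m+1) - (1 - y)| = (1 - y) - β ^ (m+1) := by
        rw [abs_sub_comm]; exact abs_of_pos (by linarith)
      have e4 : |1 - β ^ m - (1 - y)| = y - β ^ m := by
        rw [show 1 - β ^ m - (1 - y) = y - β ^ m by ring]
        exact abs_of_pos (by linarith)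
      rw [hf]
      simp only []
      rw [e1, e2, e3, e4, div_mul_div_comm, le_div_iff₀ (by nlinarith), one_mul, hbm1]
      have := aux_pairineq β (β ^ m) y hβ hβ' hbm hbm3 hlo hhi
      nlinarith [this]
    have himage : T.image (fun y => 1 - y) = T := by
      ext a
      simp only [Finset.mem_image]
      constructor
      · rintro ⟨y, hy, rfl⟩; exact hTclosed y hy
      · intro ha; exact ⟨1 - a, hTclosed a ha, by ring⟩
    have hreindex : ∏ y ∈ T, f (1 - y) = ∏ y ∈ T, f y := by
      rw [← Finset.prod_image (g := fun y : ℝ => 1 - y)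
        (fun x _ y _ h => by dsimp at h; linarith), himage]
    have hfnn : ∀ y : ℝ, 0 ≤ f y := fun y => div_nonneg (abs_nonneg _) (abs_nonneg _)
    have hPnn : 0 ≤ ∏ y ∈ T, f y := Finset.prod_nonneg fun y _ => hfnn y
    have hsq : 1 ≤ (∏ y ∈ T, f y) * (∏ y ∈ T, f y) := by
      nth_rewrite 2 [← hreindex]
      rw [← Finset.prod_mul_distrib]
      calc (1:ℝ) = ∏ _y ∈ T, (1:ℝ) := by simp
      _ ≤ ∏ y ∈ T, f y * f (1 - y) :=
        Finset.prod_le_prod (by intros; norm_num) (fun i hi => hpair i hi)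
    have hT1 : 1 ≤ ∏ y ∈ T, f y := by nlinarith
    have hdecomp : ∏ y ∈ S, f y = f 0 * (f (β ^ m) * (f 1 * ∏ y ∈ T, f y)) := by
      rw [hT, Finset.mul_prod_erase _ f h1S, Finset.mul_prod_erase _ f hbS,
        Finset.mul_prod_erase _ f h0S]
    have hd1 : (0:ℝ) < 1 - β ^ m := by nlinarith
    have hd2 : (0:ℝ) < 1 - 2 * β ^ m := by nlinarith
    have v0 : f 0 = β ^ (m+1) / (1 - β ^ m) := by
      rw [hf]; simp only [sub_zero]
      rw [abs_of_pos (pow_pos hβ _), abs_of_pos hd1]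
    have vb : f (β ^ m) = (β ^ m - β ^ (m+1)) / (1 - 2 * β ^ m) := by
      rw [hf]; simp only []
      rw [abs_sub_comm, abs_of_pos (by linarith),
        show 1 - β ^ m - β ^ m = 1 - 2 * β ^ m by ring, abs_of_pos hd2]
    have v1 : f 1 = (1 - β ^ (m+1)) / β ^ m := by
      rw [hf]; simp only []
      rw [abs_sub_comm, abs_of_pos (by nlinarith),
        show 1 - β ^ m - 1 = -(β ^ m) by ring, abs_neg, abs_of_pos hbm]
    have hprod3 : β ^ (m+2) ≤ f 0 * (f (β ^ m) * f 1) := by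
      rw [v0, vb, v1, div_mul_div_comm, div_mul_div_comm,
        le_div_iff₀ (mul_pos hd1 (mul_pos hd2 hbm))]
      rw [hbm2, hbm1]
      exact aux_prod3 β (β ^ m) hβ hβ' hbm hbm3
    calc β ^ (m+2) ≤ f 0 * (f (β ^ m) * f 1) := hprod3
    _ ≤ f 0 * (f (β ^ m) * (f 1 * ∏ y ∈ T, f y)) := by
        have h1p : 0 ≤ f 1 := hfnn 1
        have hbp : 0 ≤ f (β ^ m) := hfnn _
        have h0p : 0 ≤ f 0 := hfnn 0
        have : f 1 ≤ f 1 * ∏ y ∈ T, f y := le_mul_of_one_le_right h1p hT1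
        nlinarith [mul_le_mul_of_nonneg_left this hbp]
    _ = ∏ y ∈ S, f y := hdecomp.symm
  -- ====== top-level product bound ======
  have TopBound : ∀ m, 1 ≤ m → β ^ (m + 2) * ((1 - β^2)⁻¹) ^ (2 ^ (m + 1)) ≤
      ∏ y ∈ (Y (m + 1)).erase (β - β ^ (m + 1)),
        |β ^ (m + 2) - y| / |β - β ^ (m + 1) - y| := by
    intro m hm
    have hbm : 0 < β ^ m := pow_pos hβ m
    have hbmβ : β ^ m ≤ β := by
      calc β ^ m ≤ β ^ 1 := pow_le_pow_of_le_one hβ.le hβ1.le hm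
      _ = β := pow_one β
    have hbm1 : β ^ (m+1) = β * β ^ m := by ring
    have hbm2 : β ^ (m+2) = β * β ^ (m+1) := by ring
    set g : ℝ → ℝ := fun t => |β ^ (m + 2) - t| / |β - β ^ (m + 1) - t| with hg
    set A : Finset ℝ := (Y m).image (fun y => β * y) with hA
    set B : Finset ℝ := (Y m).image (fun y => 1 - β + β * y) with hB
    have hz0 : β - β ^ (m+1) = β * (1 - β ^ m) := by rw [hbm1]; ring
    have hinj1 : Function.Injective (fun y : ℝ => β * y) :=
      fun a b h => mul_left_cancel₀ (ne_of_gt hβ) h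
    have hz0B : β - β ^ (m+1) ∉ B := by
      rw [hB]
      simp only [Finset.mem_image, not_exists]
      rintro y ⟨hy, heq⟩
      have h0 := (Ysub m y hy).1
      have hb1 : 0 < β ^ (m+1) := pow_pos hβ _
      nlinarith
    have hdisjAB : Disjoint A B := by
      rw [hA, hB, Finset.disjoint_left]
      rintro a ha hb
      simp only [Finset.mem_image] at ha hb
      obtain ⟨y, hy, rfl⟩ := ha
      obtain ⟨y', hy', heq⟩ := hb
      have h1 := (Ysub m y hy).2
      have h2 := (Ysub m y' hy').1
      nlinarith
    have herase : (Y (m+1)).erase (β - β ^ (m+1)) = (A.erase (β - β ^ (m+1))) ∪ B := by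
      rw [Ysplit m, ← hA, ← hB, Finset.erase_union_distrib,
        Finset.erase_eq_of_notMem hz0B]
    have hAerase : A.erase (β - β ^ (m+1)) = ((Y m).erase (1 - β ^ m)).image (fun y => β * y) := by
      rw [hA, hz0, Finset.image_erase hinj1]
    have hdisj2 : Disjoint (A.erase (β - β ^ (m+1))) B :=
      Finset.disjoint_of_subset_left (Finset.erase_subset _ _) hdisjAB
    rw [herase, Finset.prod_union hdisj2, hAerase]
    have hleft : ∏ x ∈ ((Y m).erase (1 - β ^ m)).image (fun y => β * y), g x =
        ∏ y ∈ (Y m).erase (1 - β ^ m), |β ^ (m + 1) - y| / |1 - β ^ m - y| := by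
      rw [Finset.prod_image (fun x _ y _ h => hinj1 h)]
      apply Finset.prod_congr rfl
      intro y _
      rw [hg]
      simp only []
      rw [show β ^ (m+2) - β * y = β * (β ^ (m+1) - y) by rw [hbm2]; ring,
        show β - β ^ (m+1) - β * y = β * (1 - β ^ m - y) by rw [hbm1]; ring,
        abs_mul, abs_mul, abs_of_pos hβ, mul_div_mul_left _ _ (ne_of_gt hβ)]
    have hq0 : (0:ℝ) < 1 - β ^ 2 := by nlinarith
    have hright : ((1 - β^2)⁻¹) ^ (2 ^ (m + 1)) ≤ ∏ x ∈ B, g x := by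
      rw [hB, Finset.prod_image (by
        intro a _ b _ h
        have h' : 1 - β + β * a = 1 - β + β * b := h
        have : β * a = β * b := by linarith
        exact mul_left_cancel₀ (ne_of_gt hβ) this)]
      calc ((1 - β^2)⁻¹) ^ (2 ^ (m + 1)) = ∏ _y ∈ Y m, (1 - β^2)⁻¹ := by
            rw [Finset.prod_const, Ycard m]
      _ ≤ ∏ y ∈ Y m, g (1 - β + β * y) := by
          apply Finset.prod_le_prod
          · intro i _; positivity
          · intro y hy
            obtain ⟨hy0, hy1⟩ := Ysub m y hy
            rw [hg]
            simp only []
            have hbp1 : 0 < β ^ (m+1) := pow_pos hβ _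
            have hbp2 : β ^ (m+2) ≤ β ^ 3 := pow_le_pow_of_le_one hβ.le hβ1.le (by omega)
            have hb3 : β ^ 3 ≤ β := by nlinarith [pow_pos hβ 3]
            have hnum : |β ^ (m+2) - (1 - β + β * y)| = 1 - β + β * y - β ^ (m+2) := by
              rw [abs_sub_comm]
              apply abs_of_pos
              nlinarith [mul_nonneg hβ.le hy0]
            have hden : |β - β ^ (m+1) - (1 - β + β * y)| = 1 - 2*β + β ^ (m+1) + β * y := by
              rw [abs_sub_comm,
                show 1 - β + β * y - (β - β ^ (m+1)) = 1 - 2*β + β ^ (m+1) + β * y by ring]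
              apply abs_of_pos
              nlinarith [mul_nonneg hβ.le hy0]
            rw [hnum, hden, le_div_iff₀ (by nlinarith [mul_nonneg hβ.le hy0]),
              inv_mul_le_iff₀ hq0]
            have := aux_rightineq β (β ^ m) y hβ hβ' hbm hbmβ hy0 hy1
            rw [hbm1] at *
            nlinarith [this]
    have hL := Qbound m hm
    rw [← hleft] at hL
    have hLnn : (0:ℝ) ≤ ∏ x ∈ ((Y m).erase (1 - β ^ m)).image (fun y => β * y), g x := by
      apply Finset.prod_nonneg
      intro i _
      exact div_nonneg (abs_nonneg _) (abs_nonneg _)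
    have hqnn : (0:ℝ) ≤ ((1 - β^2)⁻¹) ^ (2 ^ (m + 1)) := by positivity
    exact mul_le_mul hL hright hqnn hLnn
  -- ====== membership of β^s in K, z₀ in Y, bddAbove ======
  have hKsub : K ⊆ Set.Icc (0:ℝ) 1 := by
    rw [hK]
    intro x hx
    have h0 := Set.mem_iInter.1 hx 0
    simp only [pow_zero, Finset.mem_range, Set.mem_iUnion] at h0
    obtain ⟨j, hj, hmem⟩ := h0
    have hj0 : j = 0 := by omega
    subst hj0
    rw [hL0] at hmem
    simpa using hmem
  have hxK : ∀ n : ℕ, β ^ n ∈ K := by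
    intro n
    rw [hK]
    refine Set.mem_iInter.2 fun k => ?_
    simp only [Finset.mem_range, Set.mem_iUnion]
    rcases le_or_gt k n with hk | hk
    · refine ⟨0, Nat.two_pow_pos k, ?_⟩
      rw [C1 k]
      constructor
      · simpa using (pow_nonneg hβ.le n)
      · have : β ^ n ≤ β ^ k := pow_le_pow_of_le_one hβ.le hβ1.le hk
        simpa using this
    · have hd : n + (k - n) = k := by omega
      have hLval : L k (2 ^ (k - n) - 1) = β ^ n - β ^ k := by
        have := C9 n (k - n)
        rwa [hd] at this
      refine ⟨2 ^ (k - n) - 1, ?_, ?_⟩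
      · have h1 : 2 ^ (k - n) ≤ 2 ^ k := Nat.pow_le_pow_right (by norm_num) (by omega)
        have h2 : 1 ≤ 2 ^ k := Nat.one_le_two_pow
        omega
      · rw [hLval]
        have := hpow_pos k
        constructor
        · linarith
        · linarith
  -- ====== main lower bound for Λ ======
  have mainbound : ∀ s : ℕ, 3 ≤ s → β ^ s / (1 - β ^ 2) ^ 2 ^ (s - 1) ≤ Λ s := by
    intro s hs
    obtain ⟨m, rfl, hm⟩ : ∃ m, s = m + 2 ∧ 1 ≤ m := ⟨s - 2, by omega, by omega⟩
    have hs1 : m + 2 - 1 = m + 1 := by omega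
    set z₀ : ℝ := β - β ^ (m + 1) with hz₀
    set xt : ℝ := β ^ (m + 2) with hxt
    set F : ℝ → ℝ := fun x => ∑ z ∈ Y (m + 1), |∏ y ∈ (Y (m + 1)).erase z, ((x - y) / (z - y))|
      with hF
    have hΛeq : Λ (m + 2) = sSup {t : ℝ | ∃ x ∈ K, t = F x} := by
      rw [hΛ (m + 2), hs1]
    have hz0mem : z₀ ∈ Y (m + 1) := by
      rw [Ysplit m]
      apply Finset.mem_union_left
      rw [Finset.mem_image]
      exact ⟨1 - β ^ m, Ymem1b m, by rw [hz₀, pow_succ]; ring⟩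
    have hFcont : Continuous F := by
      rw [hF]
      apply continuous_finset_sum
      intro z _
      apply Continuous.abs
      apply continuous_finset_prod
      intro y _
      exact (continuous_id.sub continuous_const).div_const _
    have hbdd : BddAbove {t : ℝ | ∃ x ∈ K, t = F x} := by
      have h1 : BddAbove (F '' Set.Icc 0 1) :=
        isCompact_Icc.bddAbove_image hFcont.continuousOn
      apply h1.mono
      rintro t ⟨x, hx, rfl⟩
      exact ⟨x, hKsub hx, rfl⟩
    have hFmem : F xt ∈ {t : ℝ | ∃ x ∈ K, t = F x} := ⟨xt, hxK (m + 2), rfl⟩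
    have hsingle : |∏ y ∈ (Y (m + 1)).erase z₀, ((xt - y) / (z₀ - y))| ≤ F xt := by
      rw [hF]
      exact Finset.single_le_sum
        (f := fun z => |∏ y ∈ (Y (m + 1)).erase z, ((xt - y) / (z - y))|)
        (fun i _ => abs_nonneg _) hz0mem
    have habs : |∏ y ∈ (Y (m + 1)).erase z₀, ((xt - y) / (z₀ - y))| =
        ∏ y ∈ (Y (m + 1)).erase z₀, |xt - y| / |z₀ - y| := by
      rw [Finset.abs_prod]
      exact Finset.prod_congr rfl fun y _ => abs_div _ _
    have hchain : β ^ (m + 2) * ((1 - β ^ 2)⁻¹) ^ (2 ^ (m + 1)) ≤ F xt := by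
      calc β ^ (m + 2) * ((1 - β ^ 2)⁻¹) ^ (2 ^ (m + 1)) ≤
          ∏ y ∈ (Y (m + 1)).erase z₀, |xt - y| / |z₀ - y| := TopBound m hm
      _ = |∏ y ∈ (Y (m + 1)).erase z₀, ((xt - y) / (z₀ - y))| := habs.symm
      _ ≤ F xt := hsingle
    have hfinal : F xt ≤ Λ (m + 2) := by
      rw [hΛeq]
      exact le_csSup hbdd hFmem
    have hrw : β ^ (m + 2) / (1 - β ^ 2) ^ 2 ^ (m + 2 - 1) =
        β ^ (m + 2) * ((1 - β ^ 2)⁻¹) ^ (2 ^ (m + 1)) := by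
      rw [hs1, div_eq_mul_inv, inv_pow]
    rw [hrw]
    exact hchain.trans hfinal
  refine ⟨mainbound, ?_⟩
  -- ====== tendsto ======
  have hq0 : (0:ℝ) < 1 - β ^ 2 := by nlinarith
  have hq1' : 1 - β ^ 2 < 1 := by nlinarith
  have hq1 : 1 < (1 - β ^ 2)⁻¹ := (one_lt_inv₀ hq0).2 hq1'
  set q : ℝ := (1 - β ^ 2)⁻¹ with hqdef
  have hqpos : 0 < q := by positivity
  have htends : Filter.Tendsto (fun n : ℕ => q ^ n) Filter.atTop Filter.atTop :=
    tendsto_pow_atTop_atTop_of_one_lt hq1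
  have hev : ∀ᶠ n : ℕ in Filter.atTop, 2 / β ≤ q ^ n := htends.eventually_ge_atTop _
  have hev2 : ∀ᶠ s : ℕ in Filter.atTop, (s : ℝ) ≤ Λ s := by
    filter_upwards [hev, Filter.eventually_ge_atTop 7] with s hqs hs7
    have hs3 : 3 ≤ s := by omega
    have h2le : (2:ℝ) ≤ β * q ^ s := by
      rw [div_le_iff₀' hβ] at hqs
      exact hqs
    have step1 : (s : ℝ) ≤ 2 ^ s := by
      exact_mod_cast (Nat.lt_two_pow_self (n := s)).le
    have step2 : (2:ℝ) ^ s ≤ (β * q ^ s) ^ s := pow_le_pow_left₀ (by norm_num) h2le s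
    have step3 : (β * q ^ s) ^ s = β ^ s * q ^ (s * s) := by
      rw [mul_pow, ← pow_mul]
    have step4 : q ^ (s * s) ≤ q ^ (2 ^ (s - 1)) :=
      pow_le_pow_right₀ hq1.le (aux_nat_sq_le s hs7)
    have step5 : β ^ s * q ^ (2 ^ (s - 1)) ≤ Λ s := by
      have := mainbound s hs3
      rw [div_eq_mul_inv, ← inv_pow] at this
      rw [hqdef]
      exact this
    have hβs : (0:ℝ) < β ^ s := pow_pos hβ s
    calc (s : ℝ) ≤ 2 ^ s := step1
    _ ≤ (β * q ^ s) ^ s := step2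
    _ = β ^ s * q ^ (s * s) := step3
    _ ≤ β ^ s * q ^ (2 ^ (s - 1)) := by nlinarith [step4]
    _ ≤ Λ s := step5
  exact Filter.tendsto_atTop_mono' _ hev2 tendsto_natCast_atTop_atTop
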